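/- For any weighted cycle C_N with N odd, h(k) + h̄(k) = 1 for every natural number 2 ≤ k ≤ N. -/

import Mathlib

open Finset

namespace DualCheeger

variable {N : ℕ}

/-- The degree of a vertex `u`: `d_u = ∑_v w u v`. -/
def degree (w : Fin N → Fin N → ℝ) (u : Fin N) : ℝ := ∑ v, w u v

/-- A weighted finite graph structure on `Fin N`: symmetric nonnegative weights,
no self-loops, and strictly positive degrees. -/
def IsWeightedGraph (w : Fin N → Fin N → ℝ) : Prop :=
  (∀ u v, w u v = w v u) ∧ (∀ u v, 0 ≤ w u v) ∧ (∀ u, w u u = 0) ∧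
    ∀ u, 0 < degree w u

/-- `|E(A,B)| = ∑_{u ∈ A} ∑_{v ∈ B} w u v`. -/
def Ew (w : Fin N → Fin N → ℝ) (A B : Finset (Fin N)) : ℝ :=
  ∑ u ∈ A, ∑ v ∈ B, w u v

/-- `vol(A) = ∑_{u ∈ A} d_u`. -/
def vol (w : Fin N → Fin N → ℝ) (A : Finset (Fin N)) : ℝ := ∑ u ∈ A, degree w u

/-- The expansion `φ(S) = |E(S, Sᶜ)| / vol(S)`. -/
noncomputable def expansion (w : Fin N → Fin N → ℝ) (S : Finset (Fin N)) : ℝ :=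
  Ew w S Sᶜ / vol w S

/-- `φ̄(V₁,V₂) = 2|E(V₁,V₂)| / vol(V₁ ∪ V₂)`. -/
noncomputable def phibar (w : Fin N → Fin N → ℝ) (V₁ V₂ : Finset (Fin N)) : ℝ :=
  2 * Ew w V₁ V₂ / vol w (V₁ ∪ V₂)

/-- A `k`-subpartition: `k` nonempty pairwise disjoint subsets. -/
def IsSubpartition (k : ℕ) (P : Fin k → Finset (Fin N)) : Prop :=
  (∀ i, (P i).Nonempty) ∧ ∀ i j, i ≠ j → Disjoint (P i) (P j)

/-- The `k`-way Cheeger constant `h(k)`. -/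
noncomputable def cheeger (w : Fin N → Fin N → ℝ) (k : ℕ) : ℝ :=
  sInf { x | ∃ P : Fin k → Finset (Fin N), IsSubpartition k P ∧
    x = ⨆ i, expansion w (P i) }

/-- A `k`-sub-bipartition: `k` pairs of subsets, all `2k` subsets pairwise
disjoint, with each union `V_{2i-1} ∪ V_{2i}` nonempty. -/
def IsSubBipartition (k : ℕ) (P : Fin k → Finset (Fin N) × Finset (Fin N)) : Prop :=
  (∀ i, Disjoint (P i).1 (P i).2) ∧
    (∀ i j, i ≠ j → Disjoint ((P i).1 ∪ (P i).2) ((P j).1 ∪ (P j).2)) ∧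
    ∀ i, ((P i).1 ∪ (P i).2).Nonempty

/-- The `k`-way dual Cheeger constant `h̄(k)`. -/
noncomputable def dualCheeger (w : Fin N → Fin N → ℝ) (k : ℕ) : ℝ :=
  sSup { x | ∃ P : Fin k → Finset (Fin N) × Finset (Fin N), IsSubBipartition k P ∧
    x = ⨅ i, phibar w (P i).1 (P i).2 }

/-- `lam` enumerates the eigenvalues of the normalized Laplacian
`Δ f (u) = f u - d_u⁻¹ ∑_v w u v * f v` in nondecreasing order with multiplicity,
witnessed by a `μ`-orthonormal eigenbasis `f`. -/
def IsLapEigenbasis (w : Fin N → Fin N → ℝ) (lam : Fin N → ℝ)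
    (f : Fin N → Fin N → ℝ) : Prop :=
  Monotone lam ∧
    (∀ i j, (∑ u, degree w u * f i u * f j u) = if i = j then (1 : ℝ) else 0) ∧
    ∀ i u, f i u - (degree w u)⁻¹ * ∑ v, w u v * f i v = lam i * f i u

/-- The dual Rayleigh quotient of a function `f : V → ℝ`. -/
noncomputable def dualRayleigh (w : Fin N → Fin N → ℝ) (f : Fin N → ℝ) : ℝ :=
  (1 / 2 * ∑ u, ∑ v, w u v * (f u + f v) ^ 2) / ∑ u, degree w u * f u ^ 2

/-- The dual Rayleigh quotient of a map `F : V → ℝ^k`. -/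
noncomputable def dualRayleighVec (w : Fin N → Fin N → ℝ) {k : ℕ}
    (F : Fin N → EuclideanSpace ℝ (Fin k)) : ℝ :=
  (1 / 2 * ∑ u, ∑ v, w u v * ‖F u + F v‖ ^ 2) / ∑ u, degree w u * ‖F u‖ ^ 2

/-- The rough projective-space distance `d̄_F` between (the projections of)
`F u` and `F v`. -/
noncomputable def dbar {k : ℕ} (F : Fin N → EuclideanSpace ℝ (Fin k))
    (u v : Fin N) : ℝ :=
  min ‖‖F u‖⁻¹ • F u - ‖F v‖⁻¹ • F v‖ ‖‖F u‖⁻¹ • F u + ‖F v‖⁻¹ • F v‖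

/-- The `l²` mass of `F` on `S`: `ℰ_S = ∑_{u ∈ S} d_u ‖F u‖²`. -/
noncomputable def mass (w : Fin N → Fin N → ℝ) {k : ℕ}
    (F : Fin N → EuclideanSpace ℝ (Fin k)) (S : Finset (Fin N)) : ℝ :=
  ∑ u ∈ S, degree w u * ‖F u‖ ^ 2

/-- The distance `d̄_F(v, T)` from a vertex to a set. -/
noncomputable def dbarSet {k : ℕ} (F : Fin N → EuclideanSpace ℝ (Fin k))
    (v : Fin N) (T : Set (Fin N)) : ℝ :=
  sInf { x | ∃ t ∈ T, x = dbar F v t }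

/-- The modified dual Cheeger constant `h̄*(k)`. -/
noncomputable def dualCheegerStar (w : Fin N → Fin N → ℝ) (k : ℕ) : ℝ :=
  sSup { x | ∃ P : Fin k → Finset (Fin N) × Finset (Fin N), IsSubBipartition k P ∧
    x = ⨅ i, (2 * Ew w (P i).1 (P i).2 + 1 / 2 * Ew w ((P i).1 ∪ (P i).2)
        (Finset.univ \ Finset.univ.biUnion (fun j => (P j).1 ∪ (P j).2))) /
      vol w ((P i).1 ∪ (P i).2) }

/-- `G` is bipartite: `V = A ∪ Aᶜ` with no edges inside `A` nor inside `Aᶜ`. -/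
def IsBipartite (w : Fin N → Fin N → ℝ) : Prop :=
  ∃ A : Finset (Fin N), (∀ u ∈ A, ∀ v ∈ A, w u v = 0) ∧
    ∀ u ∈ Aᶜ, ∀ v ∈ Aᶜ, w u v = 0

/-- The equivalence relation generated by adjacency (connected components). -/
def Reach (w : Fin N → Fin N → ℝ) : Fin N → Fin N → Prop :=
  Relation.EqvGen fun u v => 0 < w u v

/-- `w` is the weight function of a weighted cycle on `Fin N`: symmetric,
nonnegative, and positive exactly on consecutive vertices mod `N`. -/
def IsCycleWeight (N : ℕ) (w : Fin N → Fin N → ℝ) : Prop :=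
  (∀ u v, w u v = w v u) ∧ (∀ u v, 0 ≤ w u v) ∧
    ∀ i j : Fin N, 0 < w i j ↔ ((i.val + 1) % N = j.val ∨ (j.val + 1) % N = i.val)

/-- The unweighted cycle on `Fin N`. -/
noncomputable def cycleWeight (N : ℕ) : Fin N → Fin N → ℝ := fun i j =>
  if (i.val + 1) % N = j.val ∨ (j.val + 1) % N = i.val then 1 else 0

/-- Proposition 7.2: for odd cycles, `h(k) + h̄(k) = 1` for `2 ≤ k ≤ N`. -/
lemma color_ne {N : ℕ} (hN3 : 3 ≤ N) (z u v : Fin N)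
    (huv : (u.val + 1) % N = v.val) (hvz : v ≠ z) :
    ((v.val + (N - z.val)) % N) % 2 ≠ ((u.val + (N - z.val)) % N) % 2 := by
  have hzN : z.val < N := z.isLt
  have huN : u.val < N := u.isLt
  have hvN : v.val < N := v.isLt
  set t := N - z.val with ht
  have h1 : (v.val + t) % N = (u.val + t + 1) % N := by
    rw [← huv, Nat.mod_add_mod]
    congr 1
    omega
  have hmod : (u.val + t) % N < N := Nat.mod_lt _ (by omega)
  rcases Nat.lt_or_ge ((u.val + t) % N + 1) N with hlt | hge
  case inr =>
    have heq : (u.val + t) % N + 1 = N := by omega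
    exfalso
    have h2 : (u.val + t + 1) % N = 0 := by
      rw [← Nat.mod_add_mod, heq, Nat.mod_self]
    have h3 : (v.val + t) % N = 0 := by rw [h1, h2]
    rcases Nat.lt_or_ge (v.val + t) N with hcase | hcase
    · rw [Nat.mod_eq_of_lt hcase] at h3; omega
    · rw [Nat.mod_eq_sub_mod hcase, Nat.mod_eq_of_lt (by omega)] at h3
      exact hvz (Fin.val_injective (by omega))
  case inl =>
    have h2 : (u.val + t + 1) % N = (u.val + t) % N + 1 := by
      rw [← Nat.mod_add_mod]
      exact Nat.mod_eq_of_lt hlt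
    rw [h1, h2]
    omega

lemma exists_split {N : ℕ} (hN3 : 3 ≤ N) {w : Fin N → Fin N → ℝ}
    (hnn : ∀ u v, 0 ≤ w u v)
    (hadj : ∀ i j : Fin N, 0 < w i j ↔ ((i.val + 1) % N = j.val ∨ (j.val + 1) % N = i.val))
    (S : Finset (Fin N)) (z : Fin N) (hz : z ∉ S) :
    ∃ V₁ V₂ : Finset (Fin N), Disjoint V₁ V₂ ∧ V₁ ∪ V₂ = S ∧
      (∀ u ∈ V₁, ∀ v ∈ V₁, w u v = 0) ∧ (∀ u ∈ V₂, ∀ v ∈ V₂, w u v = 0) := by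
  refine ⟨S.filter (fun u => ((u.val + (N - z.val)) % N) % 2 = 1),
          S.filter (fun u => ¬ ((u.val + (N - z.val)) % N) % 2 = 1), ?_, ?_, ?_, ?_⟩
  · exact disjoint_filter_filter_not S S _
  · exact filter_union_filter_not_eq _ S
  · intro u hu v hv
    simp only [mem_filter] at hu hv
    by_contra hne
    have hpos : 0 < w u v := lt_of_le_of_ne (hnn u v) (Ne.symm hne)
    rcases (hadj u v).1 hpos with h | h
    · exact color_ne hN3 z u v h (fun he => hz (he ▸ hv.1)) (by rw [hu.2, hv.2])
    · exact color_ne hN3 z v u h (fun he => hz (he ▸ hu.1)) (by rw [hu.2, hv.2])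
  · intro u hu v hv
    simp only [mem_filter] at hu hv
    by_contra hne
    have hpos : 0 < w u v := lt_of_le_of_ne (hnn u v) (Ne.symm hne)
    have hcu : ((u.val + (N - z.val)) % N) % 2 = 0 := by omega
    have hcv : ((v.val + (N - z.val)) % N) % 2 = 0 := by omega
    rcases (hadj u v).1 hpos with h | h
    · exact color_ne hN3 z u v h (fun he => hz (he ▸ hv.1)) (by rw [hcu, hcv])
    · exact color_ne hN3 z v u h (fun he => hz (he ▸ hu.1)) (by rw [hcu, hcv])

lemma iInf_one_sub' {k : ℕ} [Nonempty (Fin k)] (f : Fin k → ℝ) :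
    (⨅ i, (1 - f i)) = 1 - ⨆ i, f i := by
  have hA : BddAbove (Set.range f) := (Set.finite_range f).bddAbove
  have hB : BddBelow (Set.range (fun i => 1 - f i)) := (Set.finite_range _).bddBelow
  apply le_antisymm
  · have h : (⨆ i, f i) ≤ 1 - ⨅ i, (1 - f i) := by
      apply ciSup_le
      intro i
      have := ciInf_le hB i
      linarith
    linarith
  · apply le_ciInf
    intro i
    have := le_ciSup hA i
    linarith

theorem odd_cycle_cheeger_add_dualCheeger {N : ℕ} (hN : 3 ≤ N) (hodd : Odd N)
    (w : Fin N → Fin N → ℝ) (hC : IsCycleWeight N w)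
    (k : ℕ) (hk : 2 ≤ k) (hkN : k ≤ N) :
    cheeger w k + dualCheeger w k = 1 := by
  obtain ⟨hsym, hnn, hadj⟩ := hC
  have hN0 : 0 < N := by omega
  have hkpos : 0 < k := by omega
  haveI : Nonempty (Fin k) := ⟨⟨0, hkpos⟩⟩
  -- degrees and volumes are positive
  have hdeg : ∀ u : Fin N, 0 < degree w u := by
    intro u
    have hvlt : (u.val + 1) % N < N := Nat.mod_lt _ hN0
    have hpos : 0 < w u ⟨(u.val + 1) % N, hvlt⟩ := (hadj _ _).2 (Or.inl rfl)
    have hle : w u ⟨(u.val + 1) % N, hvlt⟩ ≤ degree w u :=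
      Finset.single_le_sum (fun v _ => hnn u v) (mem_univ _)
    linarith
  have hvolpos : ∀ S : Finset (Fin N), S.Nonempty → 0 < vol w S := fun S hS =>
    Finset.sum_pos (fun u _ => hdeg u) hS
  -- Ew facts
  have hEnn : ∀ A B : Finset (Fin N), 0 ≤ Ew w A B := fun A B =>
    Finset.sum_nonneg fun u _ => Finset.sum_nonneg fun v _ => hnn u v
  have hEsym : ∀ A B : Finset (Fin N), Ew w A B = Ew w B A := by
    intro A B
    unfold Ew
    rw [Finset.sum_comm]
    exact Finset.sum_congr rfl fun u _ => Finset.sum_congr rfl fun v _ => hsym v u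
  have hvolE : ∀ S : Finset (Fin N), vol w S = Ew w S S + Ew w S Sᶜ := by
    intro S
    unfold vol Ew degree
    rw [← Finset.sum_add_distrib]
    exact Finset.sum_congr rfl fun u _ => (Finset.sum_add_sum_compl S (w u)).symm
  have hkey : ∀ V₁ V₂ : Finset (Fin N), Disjoint V₁ V₂ →
      vol w (V₁ ∪ V₂) = Ew w V₁ V₁ + 2 * Ew w V₁ V₂ + Ew w V₂ V₂
        + Ew w (V₁ ∪ V₂) (V₁ ∪ V₂)ᶜ := by
    intro V₁ V₂ hd
    rw [hvolE (V₁ ∪ V₂)]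
    have h1 : Ew w (V₁ ∪ V₂) (V₁ ∪ V₂) = Ew w V₁ (V₁ ∪ V₂) + Ew w V₂ (V₁ ∪ V₂) :=
      Finset.sum_union hd
    have h2 : ∀ A : Finset (Fin N), Ew w A (V₁ ∪ V₂) = Ew w A V₁ + Ew w A V₂ := by
      intro A
      unfold Ew
      rw [← Finset.sum_add_distrib]
      exact Finset.sum_congr rfl fun u _ => Finset.sum_union hd
    rw [h1, h2, h2, hEsym V₂ V₁]
    ring
  -- scalar facts
  have fact1 : ∀ V₁ V₂ : Finset (Fin N), Disjoint V₁ V₂ → (V₁ ∪ V₂).Nonempty →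
      expansion w (V₁ ∪ V₂) + phibar w V₁ V₂ ≤ 1 := by
    intro V₁ V₂ hd hne
    have hv := hvolpos _ hne
    rw [expansion, phibar, ← add_div, div_le_one hv]
    have := hkey V₁ V₂ hd
    have := hEnn V₁ V₁
    have := hEnn V₂ V₂
    linarith
  have fact2 : ∀ V₁ V₂ : Finset (Fin N), Disjoint V₁ V₂ → (V₁ ∪ V₂).Nonempty →
      Ew w V₁ V₁ = 0 → Ew w V₂ V₂ = 0 →
      expansion w (V₁ ∪ V₂) + phibar w V₁ V₂ = 1 := by
    intro V₁ V₂ hd hne h1 h2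
    have hv := hvolpos _ hne
    rw [expansion, phibar, ← add_div, div_eq_one_iff_eq (ne_of_gt hv)]
    have := hkey V₁ V₂ hd
    linarith
  have hphibar_le_one : ∀ V₁ V₂ : Finset (Fin N), Disjoint V₁ V₂ → (V₁ ∪ V₂).Nonempty →
      phibar w V₁ V₂ ≤ 1 := by
    intro V₁ V₂ hd hne
    have hv := hvolpos _ hne
    rw [phibar, div_le_one hv]
    have := hkey V₁ V₂ hd
    have := hEnn V₁ V₁
    have := hEnn V₂ V₂
    have := hEnn (V₁ ∪ V₂) (V₁ ∪ V₂)ᶜ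
    linarith
  have hexp_nonneg : ∀ S : Finset (Fin N), S.Nonempty → 0 ≤ expansion w S := by
    intro S hS
    exact div_nonneg (hEnn _ _) (hvolpos S hS).le
  -- the two optimization sets
  set Aset : Set ℝ := { x | ∃ P : Fin k → Finset (Fin N), IsSubpartition k P ∧
    x = ⨆ i, expansion w (P i) } with hAset
  set Bset : Set ℝ := { x | ∃ P : Fin k → Finset (Fin N) × Finset (Fin N),
    IsSubBipartition k P ∧ x = ⨅ i, phibar w (P i).1 (P i).2 } with hBset
  have hch : cheeger w k = sInf Aset := rfl
  have hdu : dualCheeger w k = sSup Bset := rfl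
  -- A is nonempty
  have hAne : Aset.Nonempty := by
    refine ⟨_, fun i => {Fin.castLE hkN i}, ⟨fun i => Finset.singleton_nonempty _, ?_⟩, rfl⟩
    intro i j hij
    rw [Finset.disjoint_singleton]
    exact fun h => hij (Fin.castLE_injective hkN h)
  have hAlb : ∀ a ∈ Aset, (0:ℝ) ≤ a := by
    rintro a ⟨P, hP, rfl⟩
    have h0 : 0 ≤ expansion w (P (Classical.arbitrary (Fin k))) :=
      hexp_nonneg _ (hP.1 _)
    exact le_trans h0 (le_ciSup (f := fun i => expansion w (P i)) ((Set.finite_range _).bddAbove) _)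
  have hAbdd : BddBelow Aset := ⟨0, hAlb⟩
  have hBub : ∀ b ∈ Bset, b ≤ (1:ℝ) := by
    rintro b ⟨P, hP, rfl⟩
    have i0 := Classical.arbitrary (Fin k)
    have h1 : (⨅ i, phibar w (P i).1 (P i).2) ≤ phibar w (P i0).1 (P i0).2 :=
      ciInf_le ((Set.finite_range _).bddBelow) i0
    exact le_trans h1 (hphibar_le_one _ _ (hP.1 i0) (hP.2.2 i0))
  have hBbdd : BddAbove Bset := ⟨1, hBub⟩
  -- B-membership from subpartitions
  have hBmem : ∀ a ∈ Aset, (1 - a) ∈ Bset := by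
    rintro a ⟨Q, hQ, rfl⟩
    have h01 : (⟨0, hkpos⟩ : Fin k) ≠ ⟨1, by omega⟩ := by
      simp [Fin.ext_iff]
    set j : Fin k → Fin k := fun i => if i = ⟨0, hkpos⟩ then ⟨1, by omega⟩ else ⟨0, hkpos⟩
      with hj
    have hji : ∀ i, j i ≠ i := by
      intro i
      rw [hj]
      simp only []
      split_ifs with h
      · rw [h]; simp [Fin.ext_iff]
      · exact fun he => h he.symm
    have hznot : ∀ i, (hQ.1 (j i)).choose ∉ Q i := by
      intro i hmem
      exact Finset.disjoint_left.1 (hQ.2 (j i) i (hji i)) (hQ.1 (j i)).choose_spec hmem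
    choose V₁ V₂ hdisj hunion h1 h2 using
      fun i => exists_split hN hnn hadj (Q i) _ (hznot i)
    refine ⟨fun i => (V₁ i, V₂ i), ⟨hdisj, ?_, ?_⟩, ?_⟩
    · intro i j' hij
      simpa only [hunion] using hQ.2 i j' hij
    · intro i
      rw [hunion]
      exact hQ.1 i
    · have hpt : ∀ i, phibar w (V₁ i) (V₂ i) = 1 - expansion w (Q i) := by
        intro i
        have hE1 : Ew w (V₁ i) (V₁ i) = 0 :=
          Finset.sum_eq_zero fun u hu => Finset.sum_eq_zero fun v hv => h1 i u hu v hv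
        have hE2 : Ew w (V₂ i) (V₂ i) = 0 :=
          Finset.sum_eq_zero fun u hu => Finset.sum_eq_zero fun v hv => h2 i u hu v hv
        have := fact2 (V₁ i) (V₂ i) (hdisj i) (by rw [hunion]; exact hQ.1 i) hE1 hE2
        rw [hunion] at this
        linarith
      calc (1 : ℝ) - ⨆ i, expansion w (Q i)
          = ⨅ i, (1 - expansion w (Q i)) := (iInf_one_sub' _).symm
        _ = ⨅ i, phibar w (V₁ i) (V₂ i) := by
            exact iInf_congr fun i => (hpt i).symm
  have hBne : Bset.Nonempty := by
    obtain ⟨a, ha⟩ := hAne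
    exact ⟨1 - a, hBmem a ha⟩
  -- direction ≤
  have hdir1 : sSup Bset ≤ 1 - sInf Aset := by
    apply csSup_le hBne
    rintro b ⟨P, hP, rfl⟩
    have hmemA : (⨆ i, expansion w ((P i).1 ∪ (P i).2)) ∈ Aset :=
      ⟨fun i => (P i).1 ∪ (P i).2, ⟨hP.2.2, hP.2.1⟩, rfl⟩
    have hle : (⨆ i, expansion w ((P i).1 ∪ (P i).2))
        ≤ 1 - ⨅ i, phibar w (P i).1 (P i).2 := by
      apply ciSup_le
      intro i
      have h1 : (⨅ i, phibar w (P i).1 (P i).2) ≤ phibar w (P i).1 (P i).2 :=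
        ciInf_le ((Set.finite_range _).bddBelow) i
      have h2 := fact1 (P i).1 (P i).2 (hP.1 i) (hP.2.2 i)
      linarith
    have := csInf_le hAbdd hmemA
    linarith
  -- direction ≥
  have hdir2 : 1 - sSup Bset ≤ sInf Aset := by
    apply le_csInf hAne
    intro a ha
    have := le_csSup hBbdd (hBmem a ha)
    linarith
  rw [hch, hdu]
  linarith

end DualCheeger
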